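/- arXiv:2311.15255 — 5 statements merged into one kernel-verified Lean document; each statement's English description precedes it below -/
import Mathlib

section
/- Let F be a finite field and n a positive integer. Then the independence number of the unitary Cayley graph Γ(M_n(F)) of the ring of n×n matrices over F equals |F|^(n²−n). -/
open Pointwise

/-- The unitary Cayley graph of a ring `R`: vertices are elements of `R`,
and `x`, `y` are adjacent iff `x - y` is a unit. -/
def unitaryCayley (R : Type*) [Ring R] : SimpleGraph R where
  Adj x y := x ≠ y ∧ IsUnit (x - y)
  symm := by
    constructor
    rintro x y ⟨hne, hu⟩
    exact ⟨hne.symm, by simpa [neg_sub] using hu.neg⟩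
  loopless := by constructor; rintro x ⟨h, -⟩; exact h rfl

/-- A set of vertices is independent if its elements are pairwise nonadjacent. -/
def IsIndepSet {V : Type*} (G : SimpleGraph V) (A : Set V) : Prop :=
  A.Pairwise fun x y => ¬ G.Adj x y

/-- A maximal independent set. -/
def IsMaxIndepSet {V : Type*} (G : SimpleGraph V) (A : Set V) : Prop :=
  IsIndepSet G A ∧ ∀ B : Set V, IsIndepSet G B → A ⊆ B → A = B

/-- A graph is well-covered if all its maximal independent sets have the same cardinality. -/
def WellCovered {V : Type*} (G : SimpleGraph V) : Prop :=
  ∀ A B : Set V, IsMaxIndepSet G A → IsMaxIndepSet G B → A.ncard = B.ncard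

/-- The reduced `k`-diagonal matrix `D_k(a)`:  the `(i, j)` entry is `a (i - k)`
when `j = i + k` (mod `n`) and `i ≠ k`, and `0` otherwise. -/
def Dmat {n : ℕ} (F : Type*) [Field F] (k : Fin n) (a : Fin n → F) :
    Matrix (Fin n) (Fin n) F :=
  Matrix.of fun i j => if i ≠ k ∧ j = i + k then a (i - k) else 0

/-- The family `𝒟` of all reduced diagonal matrices `D_k(a₁, …, a_{n-1})`. -/
def DSet {n : ℕ} (F : Type*) [Field F] : Set (Matrix (Fin n) (Fin n) F) :=
  {M | ∃ (k : Fin n) (a : Fin n → F), M = Dmat F k a}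

/-- The Jacobson radical of a (possibly noncommutative) ring, as a two-sided ideal. -/
noncomputable def jacRad (R : Type*) [Ring R] : TwoSidedIdeal R :=
  (⊥ : TwoSidedIdeal R).jacobson

/-- The quotient of `R` by its Jacobson radical. -/
abbrev JacQuot (R : Type*) [Ring R] := (jacRad R).ringCon.Quotient

/-- The quotient map `R → R/J(R)`. -/
noncomputable def jacMk (R : Type*) [Ring R] : R →+* JacQuot R := (jacRad R).ringCon.mk'

section AuxExt

open Polynomial

variable (F : Type*) [Field F] [Fintype F] (n : ℕ)

noncomputable def ExtF : Type _ := SplittingField (X ^ (Fintype.card F ^ n) - X : F[X])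

noncomputable instance : Field (ExtF F n) := inferInstanceAs (Field (SplittingField _))
noncomputable instance : Algebra F (ExtF F n) := inferInstanceAs (Algebra F (SplittingField _))
instance : IsSplittingField F (ExtF F n) (X ^ (Fintype.card F ^ n) - X) :=
  inferInstanceAs (IsSplittingField F (SplittingField _) _)
instance : FiniteDimensional F (ExtF F n) :=
  IsSplittingField.finiteDimensional (ExtF F n) (X ^ (Fintype.card F ^ n) - X : F[X])
instance : Finite (ExtF F n) := Module.finite_of_finite F

theorem extF_card (hn : n ≠ 0) : Nat.card (ExtF F n) = Fintype.card F ^ n := by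
  haveI : Fintype (ExtF F n) := Fintype.ofFinite _
  set q := Fintype.card F with hqdef
  have hq : 1 < q := Fintype.one_lt_card
  set f : F[X] := X ^ q ^ n - X with hfdef
  have hf0 : f ≠ 0 := FiniteField.X_pow_card_pow_sub_X_ne_zero _ hn hq
  set p := ringChar F with hpdef
  obtain ⟨k, hp, hqp⟩ := FiniteField.card F p
  haveI : Fact p.Prime := ⟨hp⟩
  have hdvd : p ∣ q ^ n := dvd_pow (by rw [hqdef, hqp]; exact dvd_pow_self p k.2.ne') hn
  have hsep : f.Separable := galois_poly_separable p (q ^ n) hdvd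
  have key : Fintype.card (f.rootSet (ExtF F n)) = f.natDegree :=
    card_rootSet_eq_natDegree hsep (IsSplittingField.splits (ExtF F n) f)
  have hdeg : f.natDegree = q ^ n :=
    FiniteField.X_pow_card_pow_sub_X_natDegree_eq F hn hq
  rw [hdeg] at key
  haveI : CharP (ExtF F n) p := charP_of_injective_algebraMap
    (algebraMap F (ExtF F n)).injective p
  have hpow : q ^ n = p ^ (↑k * n) := by rw [hqdef, hqp, ← pow_mul]
  let g : ExtF F n →ₐ[F] ExtF F n :=
    { toFun := fun x => x ^ q ^ n
      map_one' := one_pow _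
      map_mul' := fun x y => mul_pow x y _
      map_zero' := zero_pow (pow_pos (by omega) n).ne'
      map_add' := fun x y => by rw [hpow]; exact add_pow_char_pow x y p (↑k * n)
      commutes' := fun a => by
        show (algebraMap F (ExtF F n) a) ^ q ^ n = algebraMap F (ExtF F n) a
        rw [← map_pow, hqdef, FiniteField.pow_card_pow] }
  have hS : (⊤ : Subalgebra F (ExtF F n)) ≤ AlgHom.equalizer g (AlgHom.id F (ExtF F n)) := by
    rw [← IsSplittingField.adjoin_rootSet (ExtF F n) f]
    rw [Algebra.adjoin_le_iff]
    intro x hx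
    rw [mem_rootSet_of_ne hf0] at hx
    have : x ^ q ^ n - x = 0 := by simpa [f, sub_eq_zero] using hx
    simpa [AlgHom.mem_equalizer, g, sub_eq_zero] using this
  have huniv : f.rootSet (ExtF F n) = Set.univ := by
    rw [Set.eq_univ_iff_forall]
    intro x
    have hx : g x = x := hS (Algebra.mem_top)
    rw [mem_rootSet_of_ne hf0]
    simp only [f, map_sub, aeval_X_pow, aeval_X]
    simpa [g, sub_eq_zero] using hx
  rw [← Nat.card_congr (Equiv.Set.univ (ExtF F n)), ← huniv, Nat.card_eq_fintype_card]
  exact key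

theorem extF_finrank (hn : n ≠ 0) : Module.finrank F (ExtF F n) = n := by
  haveI : Fintype (ExtF F n) := Fintype.ofFinite _
  have h := Module.card_eq_pow_finrank (K := F) (V := ExtF F n)
  rw [← Nat.card_eq_fintype_card, extF_card F n hn] at h
  exact (Nat.pow_right_injective (Fintype.one_lt_card (α := F)) h).symm

end AuxExt

theorem stmt0 (F : Type*) [Field F] [Fintype F] (n : ℕ) (hn : 0 < n) :
    IsGreatest {m : ℕ | ∃ A : Set (Matrix (Fin n) (Fin n) F),
        IsIndepSet (unitaryCayley (Matrix (Fin n) (Fin n) F)) A ∧ A.ncard = m}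
      (Fintype.card F ^ (n ^ 2 - n)) := by
  classical
  set q := Fintype.card F with hqdef
  have hq1 : 1 < q := Fintype.one_lt_card
  have hnn : n * (n - 1) = n ^ 2 - n := by
    rw [← Nat.pred_eq_sub_one, Nat.mul_pred, ← pow_two]
  constructor
  · -- the set of matrices with zero first row is independent of the right size
    set i0 : Fin n := ⟨0, hn⟩ with hi0
    refine ⟨{M : Matrix (Fin n) (Fin n) F | ∀ j, M i0 j = 0}, ?_, ?_⟩
    · intro x hx y hy hne hadj
      obtain ⟨-, hu⟩ := hadj
      have hdet : (x - y).det = 0 := Matrix.det_eq_zero_of_row_eq_zero i0 (fun j => by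
        simp [Matrix.sub_apply, hx j, hy j])
      have h2 := (Matrix.isUnit_iff_isUnit_det _).mp hu
      rw [hdet] at h2
      simp at h2
    · -- cardinality
      let e : ↥{M : Matrix (Fin n) (Fin n) F | ∀ j, M i0 j = 0} ≃
          ({i : Fin n // i ≠ i0} → Fin n → F) :=
        { toFun := fun M i j => M.1 i.1 j
          invFun := fun g => ⟨fun i j => if h : i = i0 then 0 else g ⟨i, h⟩ j,
            fun j => by simp⟩
          left_inv := fun M => Subtype.ext (by
            funext i j
            by_cases h : i = i0
            · subst h; simp [M.2 j]
            · simp [h])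
          right_inv := fun g => by funext i j; simp [i.2] }
      rw [← Nat.card_coe_set_eq, Nat.card_congr e, Nat.card_eq_fintype_card,
        Fintype.card_fun, Fintype.card_fun, Fintype.card_fin,
        Fintype.card_subtype_compl, Fintype.card_subtype_eq, Fintype.card_fin,
        ← pow_mul, mul_comm n (n-1), Nat.mul_comm, hnn]
  · -- upper bound
    rintro m ⟨A, hA, rfl⟩
    haveI : Fintype (ExtF F n) := Fintype.ofFinite _
    haveI : Fintype ↥A := Fintype.ofFinite _
    haveI : Nonempty (Fin n) := ⟨⟨0, hn⟩⟩
    set E := ExtF F n with hE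
    let b : Module.Basis (Fin n) F E := (Module.finBasis F E).reindex (finCongr (extF_finrank F n hn.ne'))
    let ψ : E →ₐ[F] Matrix (Fin n) (Fin n) F :=
      ((LinearMap.toMatrixAlgEquiv b).toAlgHom.comp (Algebra.lmul F E))
    have hψinj : Function.Injective ψ := ψ.toRingHom.injective
    have hψu : ∀ x : E, x ≠ 0 → IsUnit (ψ x) :=
      fun x hx => (isUnit_iff_ne_zero.mpr hx).map ψ
    have hinj : Function.Injective
        (fun p : ↥A × E => (p.1 : Matrix (Fin n) (Fin n) F) + ψ p.2) := by
      rintro ⟨⟨a, ha⟩, x⟩ ⟨⟨a', ha'⟩, x'⟩ hpe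
      simp only at hpe
      have hd : a - a' = ψ (x' - x) := by
        rw [map_sub, sub_eq_sub_iff_add_eq_add, hpe, add_comm]
      by_cases hxx : x = x'
      · subst hxx
        have : a = a' := by simpa [sub_eq_zero] using hd
        subst this; rfl
      · have hane : a ≠ a' := by
          intro h; subst h
          rw [sub_self] at hd
          exact hxx (sub_eq_zero.mp (hψinj (by rw [← hd, map_zero]))).symm
        have hu : IsUnit (a - a') := hd ▸ hψu _ (sub_ne_zero.mpr (Ne.symm hxx))
        exact absurd ⟨hane, hu⟩ (hA ha ha' hane)
    have hle : Nat.card (↥A × E) ≤ Nat.card (Matrix (Fin n) (Fin n) F) := by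
      rw [Nat.card_eq_fintype_card, Nat.card_eq_fintype_card]
      exact Fintype.card_le_of_injective _ hinj
    have hM : Nat.card (Matrix (Fin n) (Fin n) F) = q ^ (n * n) := by
      rw [Nat.card_eq_fintype_card]
      show Fintype.card (Fin n → Fin n → F) = q ^ (n * n)
      rw [Fintype.card_fun, Fintype.card_fun, ← pow_mul, ← hqdef, Fintype.card_fin]
    rw [Nat.card_prod, hM, extF_card F n hn.ne'] at hle
    have hnsq : n ^ 2 - n + n = n * n := by
      rw [Nat.sub_add_cancel (by nlinarith), pow_two]
    have hle2 : Nat.card ↥A * q ^ n ≤ q ^ (n ^ 2 - n) * q ^ n := by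
      rw [← pow_add, hnsq]; exact hle
    have := Nat.le_of_mul_le_mul_right hle2 (pow_pos (by omega) n)
    rwa [Nat.card_coe_set_eq] at this
end

section
/- Let F be a finite field and n a positive integer. Then the set 𝒟 = { D_k(a_1,…,a_{n−1}) : 1 ≤ k ≤ n, a_1,…,a_{n−1} ∈ F } is an independent set of the unitary Cayley graph Γ(M_n(F)), i.e., for any two distinct matrices D, D' in 𝒟 the difference D − D' is a singular matrix. -/
open Pointwise

lemma Dmat_det_sub_eq_zero {n : ℕ} (F : Type*) [Field F] (k k' : Fin n) (a b : Fin n → F) :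
    (Dmat F k a - Dmat F k' b).det = 0 := by
  set M := Dmat F k a - Dmat F k' b with hM
  have hrow : ∀ j, j ≠ k + k' → M k j = 0 := by
    intro j hj
    simp only [hM, Matrix.sub_apply, Dmat, Matrix.of_apply]
    rw [if_neg (by tauto), if_neg (by rintro ⟨-, h⟩; exact hj h)]
    ring
  have hrow' : ∀ j, j ≠ k + k' → M k' j = 0 := by
    intro j hj
    simp only [hM, Matrix.sub_apply, Dmat, Matrix.of_apply]
    rw [if_neg (by rintro ⟨-, h⟩; exact hj (by rw [h, add_comm])), if_neg (by tauto)]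
    ring
  rw [Matrix.det_apply]
  apply Finset.sum_eq_zero
  intro σ _
  suffices h : ∏ i, M (σ i) i = 0 by simp [h]
  by_cases hkk : k = k'
  · apply Finset.prod_eq_zero (Finset.mem_univ (σ⁻¹ k))
    rw [← Equiv.Perm.mul_apply, mul_inv_cancel, Equiv.Perm.one_apply]
    simp only [hM, Matrix.sub_apply, Dmat, Matrix.of_apply]
    rw [if_neg (by tauto), if_neg (by subst hkk; tauto)]
    ring
  · by_cases h1 : σ⁻¹ k = k + k'
    · have h2 : σ⁻¹ k' ≠ k + k' := by
        intro h2
        exact hkk (σ⁻¹.injective (h1.trans h2.symm))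
      apply Finset.prod_eq_zero (Finset.mem_univ (σ⁻¹ k'))
      rw [← Equiv.Perm.mul_apply, mul_inv_cancel, Equiv.Perm.one_apply]
      exact hrow' _ h2
    · apply Finset.prod_eq_zero (Finset.mem_univ (σ⁻¹ k))
      rw [← Equiv.Perm.mul_apply, mul_inv_cancel, Equiv.Perm.one_apply]
      exact hrow _ h1

theorem stmt3 (F : Type*) [Field F] [Fintype F] (n : ℕ) (hn : 0 < n) :
    IsIndepSet (unitaryCayley (Matrix (Fin n) (Fin n) F)) (DSet F) ∧
      ∀ D ∈ DSet (n := n) F, ∀ D' ∈ DSet (n := n) F, D ≠ D' →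
        ¬ IsUnit (D - D') := by
  have key : ∀ D ∈ DSet (n := n) F, ∀ D' ∈ DSet (n := n) F, ¬ IsUnit (D - D') := by
    rintro D ⟨k, a, rfl⟩ D' ⟨k', b, rfl⟩ hu
    have := (Matrix.isUnit_iff_isUnit_det _).mp hu
    rw [Dmat_det_sub_eq_zero] at this
    exact this.ne_zero rfl
  refine ⟨?_, fun D hD D' hD' _ => key D hD D' hD'⟩
  intro D hD D' hD' hne hadj
  exact key D hD D' hD' hadj.2
end

section
/- Let F be a finite field, n a positive integer, and let M be a maximal independent set of the unitary Cayley graph Γ(M_n(F)) containing the set 𝒟 = { D_k(a_1,…,a_{n−1}) : 1 ≤ k ≤ n, a_1,…,a_{n−1} ∈ F }. Then every matrix A ∈ M satisfies A_{k, 2k} = 0 for each 1 ≤ k ≤ n, where the column index 2k is computed modulo n (with residue 0 replaced by n). -/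
open Pointwise

open Matrix in
lemma exists_diag_det_ne_zero {F : Type*} [Field F] :
    ∀ (m : ℕ) (C : Matrix (Fin (m+1)) (Fin (m+1)) F) (k : Fin (m+1)), C k k ≠ 0 →
      ∃ d : Fin (m+1) → F, d k = 0 ∧ (C + Matrix.diagonal d).det ≠ 0 := by
  intro m
  induction m with
  | zero =>
    intro C k hk
    refine ⟨0, rfl, ?_⟩
    have hk0 : k = 0 := Fin.fin_one_eq_zero k
    simpa [Matrix.det_fin_one, hk0] using hk
  | succ m ih =>
    intro C k hk
    obtain ⟨j, hj⟩ := exists_ne k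
    obtain ⟨k', hk'⟩ := Fin.exists_succAbove_eq (Ne.symm hj)
    set C' : Matrix (Fin (m+1)) (Fin (m+1)) F := C.submatrix j.succAbove j.succAbove with hC'
    have hC'kk : C' k' k' ≠ 0 := by simpa [hC', hk'] using hk
    obtain ⟨d', hd'k, hd'⟩ := ih C' k' hC'kk
    set N : F → Matrix (Fin (m+2)) (Fin (m+2)) F :=
      fun x => C + Matrix.diagonal (j.insertNth x d') with hN
    have hrow0 : (N 0) j = C j := by
      funext l
      by_cases h : j = l <;>
        simp [hN, Matrix.add_apply, Matrix.diagonal_apply, h, Fin.insertNth_apply_same]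
    have hminor : (Matrix.updateRow (N 0) j (Pi.single j (1:F))).submatrix
        j.succAbove j.succAbove = C' + Matrix.diagonal d' := by
      ext t s
      rw [Matrix.submatrix_apply, Matrix.updateRow_ne (Fin.succAbove_ne j t)]
      simp only [hN, Matrix.add_apply, Matrix.diagonal_apply, hC', Matrix.submatrix_apply]
      by_cases h : t = s
      · simp [h, Fin.insertNth_apply_succAbove]
      · have : j.succAbove t ≠ j.succAbove s := fun hh => h (j.succAbove_right_injective hh)
        simp [h, this]
    have hB : (Matrix.updateRow (N 0) j (Pi.single j (1:F))).det
        = (C' + Matrix.diagonal d').det := by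
      rw [Matrix.det_succ_row _ j]
      rw [Finset.sum_eq_single j]
      · rw [Matrix.updateRow_self]
        simp [hminor, ← two_mul, pow_mul]
      · intro l _ hl
        rw [Matrix.updateRow_self, Pi.single_apply, if_neg hl]
        ring
      · intro h; exact absurd (Finset.mem_univ j) h
    have key : ∀ x : F, (N x).det = (N 0).det
        + x * (C' + Matrix.diagonal d').det := by
      intro x
      have h1 : N x = Matrix.updateRow (N 0) j (C j + x • (Pi.single j 1 : Fin (m+2) → F)) := by
        ext i l
        by_cases hij : i = j
        · subst hij
          rw [Matrix.updateRow_self]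
          by_cases h : i = l <;>
            simp [hN, Matrix.add_apply, Matrix.diagonal_apply, h,
              Fin.insertNth_apply_same, Pi.single_apply, mul_comm]
        · rw [Matrix.updateRow_ne hij]
          obtain ⟨t, rfl⟩ := Fin.exists_succAbove_eq hij
          simp only [hN, Matrix.add_apply, Matrix.diagonal_apply]
          by_cases h : j.succAbove t = l
          · subst h
            simp [Fin.insertNth_apply_succAbove]
          · simp [h]
      rw [h1, Matrix.det_updateRow_add, Matrix.det_updateRow_smul, ← hrow0,
        Matrix.updateRow_eq_self, hB]
    set x : F := (1 - (N 0).det) / (C' + Matrix.diagonal d').det with hx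
    refine ⟨j.insertNth x d', ?_, ?_⟩
    · rw [← hk', Fin.insertNth_apply_succAbove, hd'k]
    · show (N x).det ≠ 0
      rw [key x, hx, div_mul_cancel₀ _ hd']
      simp

theorem stmt5 (F : Type*) [Field F] [Fintype F] (n : ℕ) (hn : 0 < n)
    (M : Set (Matrix (Fin n) (Fin n) F))
    (hM : IsMaxIndepSet (unitaryCayley (Matrix (Fin n) (Fin n) F)) M)
    (hD : DSet F ⊆ M)
    (A : Matrix (Fin n) (Fin n) F) (hA : A ∈ M) (k : Fin n) :
    A k (k + k) = 0 := by
  obtain ⟨m, rfl⟩ : ∃ m, n = m + 1 := ⟨n - 1, (Nat.succ_pred_eq_of_pos hn).symm⟩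
  by_contra hc
  set C : Matrix (Fin (m+1)) (Fin (m+1)) F := Matrix.of fun i l => A i (l + k) with hC
  have hCkk : C k k ≠ 0 := by simpa [hC] using hc
  obtain ⟨d, hdk, hdet⟩ := exists_diag_det_ne_zero m C k hCkk
  set a : Fin (m+1) → F := fun t => -d (t + k) with ha
  set D : Matrix (Fin (m+1)) (Fin (m+1)) F := Dmat F k a with hDdef
  have hsub : A - D = (C + Matrix.diagonal d).submatrix id (Equiv.subRight k) := by
    ext i l
    simp only [hDdef, Matrix.sub_apply, Matrix.submatrix_apply, id_eq, Equiv.subRight_apply,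
      Matrix.add_apply, Matrix.diagonal_apply, hC, Matrix.of_apply, Dmat, sub_add_cancel, ha]
    by_cases h1 : l = i + k
    · have h1' : i = l - k := by rw [h1, add_sub_cancel_right]
      by_cases h2 : i = k
      · rw [if_neg (by simp [h2]), if_pos h1', h2, hdk]
        ring
      · rw [if_pos ⟨h2, h1⟩, if_pos h1']
        ring
    · have h1' : ¬ (i = l - k) := fun h => h1 (by rw [h, sub_add_cancel])
      rw [if_neg (fun h => h1 h.2), if_neg h1']
      ring
  have hdet2 : (A - D).det ≠ 0 := by
    rw [hsub]
    rw [Matrix.det_permute' (Equiv.subRight k) (C + Matrix.diagonal d)]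
    rcases Int.units_eq_one_or (Equiv.Perm.sign (Equiv.subRight k : Equiv.Perm (Fin (m+1)))) with h | h <;>
      simp [h, hdet]
  have hu : IsUnit (A - D) := by
    rw [Matrix.isUnit_iff_isUnit_det, isUnit_iff_ne_zero]
    exact hdet2
  have hne : A ≠ D := by
    intro h
    rw [h, sub_self, Matrix.det_zero] at hdet2
    exact hdet2 rfl
  exact hM.1 hA (hD ⟨k, a, rfl⟩) hne ⟨hne, hu⟩
end

section
/- Let R be a finite ring with identity, J(R) its Jacobson radical, and A a subset of R; let Ā denote the image of A in R/J(R) under the quotient map. Then A is a maximal independent set of the unitary Cayley graph Γ(R) if and only if Ā is a maximal independent set of Γ(R/J(R)) and A = A + J(R) (i.e., A is a union of cosets of J(R)). -/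
open Pointwise

lemma jacMk_surj (R : Type*) [Ring R] : Function.Surjective (jacMk R) :=
  fun x => Quotient.inductionOn' x fun a => ⟨a, rfl⟩

lemma jacMk_eq_iff {R : Type*} [Ring R] {x y : R} :
    jacMk R x = jacMk R y ↔ x - y ∈ jacRad R :=
  ((jacRad R).ringCon.eq).trans (TwoSidedIdeal.rel_iff _ _ _)

lemma isUnit_of_left {R : Type*} [Ring R] [Finite R] {w x : R} (h : w * x = 1) : IsUnit x := by
  have hinj : Function.Injective (fun r => x * r) := fun a b hab => by
    have := congrArg (w * ·) hab
    simpa [← mul_assoc, h] using this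
  obtain ⟨s, hs⟩ := (Finite.injective_iff_surjective.mp hinj) 1
  simp only [] at hs
  have hw : w = s := by
    calc w = w * (x * s) := by rw [hs, mul_one]
    _ = (w * x) * s := by rw [mul_assoc]
    _ = s := by rw [h, one_mul]
  exact ⟨⟨x, s, hs, by rw [← hw, h]⟩, rfl⟩

lemma isUnit_of_jacMk {R : Type*} [Ring R] [Finite R] {x : R}
    (h : IsUnit (jacMk R x)) : IsUnit x := by
  obtain ⟨u, hu⟩ := h
  obtain ⟨b, hb⟩ := jacMk_surj R ((u⁻¹ : (JacQuot R)ˣ) : JacQuot R)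
  have h1 : jacMk R (b * x) = jacMk R 1 := by
    rw [map_mul, map_one, hb, ← hu]; exact u.inv_mul
  have hj : b * x - 1 ∈ jacRad R := jacMk_eq_iff.mp h1
  rw [jacRad, TwoSidedIdeal.mem_jacobson_iff] at hj
  obtain ⟨z, hz⟩ := hj 1
  rw [TwoSidedIdeal.mem_bot] at hz
  have h2 : (z * b) * x = 1 := by
    have h3 : (z * b) * x - 1 = 0 := by rw [← hz]; noncomm_ring
    exact sub_eq_zero.mp h3
  exact isUnit_of_left h2

lemma subsingleton_of_jac_unit {R : Type*} [Ring R] {j : R}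
    (hj : j ∈ jacRad R) (hu : IsUnit j) : Subsingleton R := by
  obtain ⟨u, hu⟩ := hu
  rw [jacRad, TwoSidedIdeal.mem_jacobson_iff] at hj
  obtain ⟨z, hz⟩ := hj (-(↑u⁻¹ : R))
  rw [TwoSidedIdeal.mem_bot, ← hu] at hz
  have h2 : z * -(↑u⁻¹ : R) * ↑u = -z := by
    rw [mul_assoc, neg_mul, u.inv_mul, mul_neg, mul_one]
  rw [h2, neg_add_cancel, zero_sub, neg_eq_zero] at hz
  exact subsingleton_of_zero_eq_one hz.symm

lemma jacMk_eq_zero {R : Type*} [Ring R] {j : R} (hj : j ∈ jacRad R) : jacMk R j = 0 := by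
  rw [← map_zero (jacMk R), jacMk_eq_iff, sub_zero]; exact hj

lemma uc_adj {R : Type*} [Ring R] {x y : R} :
    (unitaryCayley R).Adj x y ↔ x ≠ y ∧ IsUnit (x - y) := Iff.rfl

lemma adj_quot {R : Type*} [Ring R] {x y : R} (h : (unitaryCayley R).Adj x y) :
    (unitaryCayley (JacQuot R)).Adj (jacMk R x) (jacMk R y) := by
  obtain ⟨hne, hu⟩ := uc_adj.mp h
  refine uc_adj.mpr ⟨fun he => ?_, by rw [← map_sub]; exact hu.map _⟩
  have hs := subsingleton_of_jac_unit (jacMk_eq_iff.mp he) hu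
  exact hne (Subsingleton.elim x y)

lemma adj_of_quot {R : Type*} [Ring R] [Finite R] {x y : R}
    (h : (unitaryCayley (JacQuot R)).Adj (jacMk R x) (jacMk R y)) :
    (unitaryCayley R).Adj x y := by
  obtain ⟨hne, hu⟩ := uc_adj.mp h
  rw [← map_sub] at hu
  exact uc_adj.mpr ⟨fun he => hne (by rw [he]), isUnit_of_jacMk hu⟩

theorem stmt7 (R : Type*) [Ring R] [Finite R] (A : Set R) :
    IsMaxIndepSet (unitaryCayley R) A ↔
      (IsMaxIndepSet (unitaryCayley (JacQuot R)) (jacMk R '' A) ∧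
        A = A + (jacRad R : Set R)) := by
  have hsymm : Symmetric fun x y : R => ¬(unitaryCayley R).Adj x y :=
    fun x y h hadj => h hadj.symm
  constructor
  · rintro ⟨hA, hmax⟩
    have hAJ : A = A + (jacRad R : Set R) := by
      apply Set.Subset.antisymm
      · intro a ha
        exact Set.mem_add.mpr ⟨a, ha, 0, (jacRad R).zero_mem, add_zero a⟩
      · rintro x hx
        obtain ⟨a, ha, j, hj, rfl⟩ := Set.mem_add.mp hx
        have hj' : j ∈ jacRad R := hj
        have hπ : jacMk R (a + j) = jacMk R a := jacMk_eq_iff.mpr (by simpa using hj')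
        have hind : IsIndepSet (unitaryCayley R) (insert (a + j) A) := by
          haveI : Std.Symm fun x y : R => ¬(unitaryCayley R).Adj x y := ⟨hsymm⟩
          rw [IsIndepSet, Set.pairwise_insert_of_symmetric]
          refine ⟨hA, fun b hb hne hadj => ?_⟩
          have h2 := adj_quot hadj
          rw [hπ] at h2
          have h3 := adj_of_quot h2
          exact hA ha hb h3.1 h3
        have := hmax _ hind (Set.subset_insert _ _)
        rw [this]; exact Set.mem_insert _ _
    refine ⟨⟨?_, ?_⟩, hAJ⟩
    · rintro - ⟨x, hx, rfl⟩ - ⟨y, hy, rfl⟩ hxy hadj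
      have h3 := adj_of_quot hadj
      exact hA hx hy h3.1 h3
    · intro B hB hsub
      have hpre : IsIndepSet (unitaryCayley R) (jacMk R ⁻¹' B) :=
        fun x hx y hy hxy hadj => by
          have h2 := adj_quot hadj
          exact hB hx hy h2.1 h2
      have hsub2 : A ⊆ jacMk R ⁻¹' B := fun a ha => hsub (Set.mem_image_of_mem _ ha)
      rw [hmax _ hpre hsub2, Set.image_preimage_eq B (jacMk_surj R)]
  · rintro ⟨⟨hQ, hQmax⟩, hAJ⟩
    constructor
    · intro a ha b hb hab hadj
      have h2 := adj_quot hadj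
      exact hQ (Set.mem_image_of_mem _ ha) (Set.mem_image_of_mem _ hb) h2.1 h2
    · intro B hB hsub
      have hBQ : IsIndepSet (unitaryCayley (JacQuot R)) (jacMk R '' B) := by
        rintro - ⟨x, hx, rfl⟩ - ⟨y, hy, rfl⟩ hxy hadj
        have h3 := adj_of_quot hadj
        exact hB hx hy h3.1 h3
      have heq := hQmax _ hBQ (Set.image_mono hsub)
      refine Set.Subset.antisymm hsub fun b hb => ?_
      have hmem : jacMk R b ∈ jacMk R '' A := by
        rw [heq]; exact Set.mem_image_of_mem _ hb
      obtain ⟨a, ha, hab⟩ := hmem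
      have hj : a - b ∈ jacRad R := jacMk_eq_iff.mp hab
      rw [hAJ]
      exact Set.mem_add.mpr ⟨a, ha, b - a,
        by simpa [neg_sub] using (jacRad R).neg_mem hj, by abel⟩
end

section
/- Let F be a finite field and n ≥ 2 an integer. Let ℱ be the set of all matrices in M_n(F) whose first row is zero, and let M ∈ ℱ. Then every independent set of the unitary Cayley graph Γ(M_n(F)) that contains ℱ ∖ {M} is contained in ℱ; in particular, ℱ is the unique maximal independent set of Γ(M_n(F)) containing ℱ ∖ {M}. -/
open Pointwise

/-- Any nonzero vector is a row of some invertible matrix. -/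
lemma exists_unit_completion (F : Type*) [Field F] (n : ℕ) (z j0 : Fin n)
    (r : Fin n → F) (hr : r j0 ≠ 0) :
    ∃ C : Matrix (Fin n) (Fin n) F, C z = r ∧ IsUnit C := by
  classical
  set σ : Equiv.Perm (Fin n) := Equiv.swap z j0 with hσ
  set P : Matrix (Fin n) (Fin n) F := σ.permMatrix F with hP
  refine ⟨P.updateRow z r, Matrix.updateRow_self, ?_⟩
  rw [Matrix.isUnit_iff_isUnit_det]
  have hrow : r = ∑ k, (r (σ k)) • P k := by
    funext l
    simp only [Finset.sum_apply, Pi.smul_apply, hP, Equiv.Perm.permMatrix,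
      PEquiv.toMatrix_apply, Equiv.toPEquiv_apply, Option.mem_some_iff, smul_eq_mul]
    rw [show (∑ x, r (σ x) * if σ x = l then 1 else 0)
        = ∑ x, (fun j => r j * if j = l then 1 else 0) (σ x) from rfl,
      Equiv.sum_comp σ (fun j => r j * if j = l then 1 else 0)]
    simp
  have hdet : (P.updateRow z r).det = (r (σ z)) • P.det := by
    have h := Matrix.det_updateRow_sum P z (fun k => r (σ k))
    rw [← hrow] at h
    exact h
  rw [hdet, Matrix.det_permutation]
  have h1 : IsUnit (r (σ z)) := by
    have : σ z = j0 := Equiv.swap_apply_left z j0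
    rw [this]; exact isUnit_iff_ne_zero.mpr hr
  have h2 : IsUnit (((Equiv.Perm.sign σ : ℤˣ) : ℤ) : F) :=
    IsUnit.map (Int.castRingHom F) (Units.isUnit _)
  simpa [smul_eq_mul] using h1.mul h2

theorem stmt15 (F : Type*) [Field F] [Fintype F] (n : ℕ) (hn : 2 ≤ n)
    (M : Matrix (Fin n) (Fin n) F)
    (hM : M ∈ {A : Matrix (Fin n) (Fin n) F | ∀ j, A ⟨0, by omega⟩ j = 0}) :
    (∀ I : Set (Matrix (Fin n) (Fin n) F),
        IsIndepSet (unitaryCayley (Matrix (Fin n) (Fin n) F)) I →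
        {A : Matrix (Fin n) (Fin n) F | ∀ j, A ⟨0, by omega⟩ j = 0} \ {M} ⊆ I →
        I ⊆ {A : Matrix (Fin n) (Fin n) F | ∀ j, A ⟨0, by omega⟩ j = 0}) ∧
      (∀ I : Set (Matrix (Fin n) (Fin n) F),
        IsMaxIndepSet (unitaryCayley (Matrix (Fin n) (Fin n) F)) I →
        {A : Matrix (Fin n) (Fin n) F | ∀ j, A ⟨0, by omega⟩ j = 0} \ {M} ⊆ I →
        I = {A : Matrix (Fin n) (Fin n) F | ∀ j, A ⟨0, by omega⟩ j = 0}) := by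
  classical
  set z : Fin n := ⟨0, by omega⟩ with hz
  set o : Fin n := ⟨1, by omega⟩ with ho
  have hzo : o ≠ z := by simp [hz, ho, Fin.ext_iff]
  set 𝓕 : Set (Matrix (Fin n) (Fin n) F) :=
    {A : Matrix (Fin n) (Fin n) F | ∀ j, A z j = 0} with h𝓕
  -- 𝓕 is independent
  have hFind : IsIndepSet (unitaryCayley (Matrix (Fin n) (Fin n) F)) 𝓕 := by
    rintro A hA B hB hne ⟨-, hu⟩
    have hdet : (A - B).det = 0 := by
      apply Matrix.det_eq_zero_of_row_eq_zero z
      intro j; simp [hA j, hB j]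
    have := (Matrix.isUnit_iff_isUnit_det _).mp hu
    rw [hdet] at this
    exact (not_isUnit_zero this).elim
  have part1 : ∀ I : Set (Matrix (Fin n) (Fin n) F),
      IsIndepSet (unitaryCayley (Matrix (Fin n) (Fin n) F)) I →
      𝓕 \ {M} ⊆ I → I ⊆ 𝓕 := by
    intro I hI hsub B hB
    by_contra hBnot
    have : ∃ j0, B z j0 ≠ 0 := by
      by_contra h; push_neg at h; exact hBnot h
    obtain ⟨j0, hj0⟩ := this
    obtain ⟨C, hCz, hCu⟩ := exists_unit_completion F n z j0 (B z) hj0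
    set C' : Matrix (Fin n) (Fin n) F := C.updateRow o (C o + C z) with hC'
    have hC'u : IsUnit C' := by
      rw [Matrix.isUnit_iff_isUnit_det, Matrix.det_updateRow_add_self C hzo]
      exact (Matrix.isUnit_iff_isUnit_det _).mp hCu
    have hC'z : C' z = C z := Matrix.updateRow_ne (Ne.symm hzo)
    have hCne : C ≠ C' := by
      intro h
      have h2 : C o = C o + C z := by
        conv_lhs => rw [h]
        simp [hC']
      have h3 : C z = 0 := by
        have := h2.symm
        rwa [add_eq_left] at this
      rw [hCz] at h3
      exact hj0 (by rw [h3]; rfl)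
    have hA1 : (B - C) ∈ 𝓕 := by intro j; simp [hCz]
    have hA2 : (B - C') ∈ 𝓕 := by intro j; simp [hC'z, hCz]
    have hA12 : (B - C) ≠ (B - C') := by
      intro h; exact hCne (sub_right_injective h)
    -- pick one that is not M
    obtain ⟨A, hAF, hAne, hAu⟩ :
        ∃ A, A ∈ 𝓕 ∧ A ≠ M ∧ IsUnit (B - A) := by
      by_cases hc : (B - C) = M
      · refine ⟨B - C', hA2, ?_, ?_⟩
        · intro h; exact hA12 (hc.trans h.symm)
        · rw [sub_sub_cancel]; exact hC'u
      · exact ⟨B - C, hA1, hc, by rw [sub_sub_cancel]; exact hCu⟩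
    have hAI : A ∈ I := hsub ⟨hAF, hAne⟩
    have hBA : B ≠ A := by
      intro h; rw [h] at hBnot; exact hBnot hAF
    exact hI hB hAI hBA ⟨hBA, hAu⟩
  refine ⟨part1, ?_⟩
  intro I hI hsub
  obtain ⟨hind, hmax⟩ := hI
  exact hmax 𝓕 hFind (part1 I hind hsub)
end
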